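/- Let A be an n×n negative definite real matrix and B an m×m negative definite real matrix, let D (n×n) and E (m×m) be diagonal real matrices with strictly positive diagonal entries, let κ_α ≥ 0, κ_β ≥ 0 be real constants, and let c_x > 0, c_y > 0. Define 𝒜_x = c_x · ( I_m ⊗ (D·(A + κ_α·Aᵀ)) ) and 𝒜_y = c_y · ( (E·(B + κ_β·Bᵀ)) ⊗ I_n ). Then: (i) 𝒜_x·𝒜_y = 𝒜_y·𝒜_x; (ii) I − 𝒜_x and I − 𝒜_y are invertible; and (iii) every eigenvalue μ ∈ ℂ of (I − 𝒜_y)⁻¹·(I − 𝒜_x)⁻¹·(I + 𝒜_x)·(I + 𝒜_y), regarded as a complex matrix, satisfies |μ| < 1, i.e., its spectral radius is strictly less than 1. (This is the unconditional stability of the two-dimensional alternating-direction Crank–Nicolson WSLD scheme.) -/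

import Mathlib

open Matrix
open scoped Kronecker

/-- A real square matrix `M` is negative definite if `xᵀ M x < 0` for every nonzero `x`. -/
def NegDef {n : ℕ} (M : Matrix (Fin n) (Fin n) ℝ) : Prop :=
  ∀ x : Fin n → ℝ, x ≠ 0 → x ⬝ᵥ M.mulVec x < 0

lemma quad_diag_kron {m n : ℕ} (a : Fin m → ℝ) (M : Matrix (Fin n) (Fin n) ℝ)
    (x : Fin m × Fin n → ℝ) :
    x ⬝ᵥ (Matrix.diagonal a ⊗ₖ M) *ᵥ x
      = ∑ j, a j * ((fun i => x (j, i)) ⬝ᵥ M *ᵥ (fun i => x (j, i))) := by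
  simp only [dotProduct, Matrix.mulVec, Matrix.kroneckerMap_apply,
    Matrix.diagonal_apply, Fintype.sum_prod_type, ite_mul, mul_ite, zero_mul, mul_zero,
    Finset.sum_ite_irrel, Finset.sum_const_zero, Finset.sum_ite_eq, Finset.mem_univ,
    if_true, Finset.mul_sum, Finset.sum_mul]
  apply Finset.sum_congr rfl; intro j _
  apply Finset.sum_congr rfl; intro i _
  apply Finset.sum_congr rfl; intro i' _
  ring

lemma quad_kron_diag {m n : ℕ} (a : Fin n → ℝ) (M : Matrix (Fin m) (Fin m) ℝ)
    (x : Fin m × Fin n → ℝ) :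
    x ⬝ᵥ (M ⊗ₖ Matrix.diagonal a) *ᵥ x
      = ∑ i, a i * ((fun j => x (j, i)) ⬝ᵥ M *ᵥ (fun j => x (j, i))) := by
  simp only [dotProduct, Matrix.mulVec, Matrix.kroneckerMap_apply,
    Matrix.diagonal_apply, Fintype.sum_prod_type, mul_ite, ite_mul, zero_mul, mul_zero,
    Finset.sum_ite_irrel, Finset.sum_const_zero, Finset.sum_ite_eq, Finset.mem_univ,
    if_true, Finset.mul_sum, Finset.sum_mul]
  rw [Finset.sum_comm]
  apply Finset.sum_congr rfl; intro i _
  apply Finset.sum_congr rfl; intro j _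
  apply Finset.sum_congr rfl; intro j' _
  ring

lemma reQuad {ι : Type*} [Fintype ι] (N : Matrix ι ι ℝ) (u : ι → ℂ) :
    (∑ p, (starRingEnd ℂ) (u p) * ((N.map Complex.ofReal) *ᵥ u) p).re
      = (fun p => (u p).re) ⬝ᵥ N *ᵥ (fun p => (u p).re)
        + (fun p => (u p).im) ⬝ᵥ N *ᵥ (fun p => (u p).im) := by
  simp only [Matrix.mulVec, dotProduct, Matrix.map_apply, Complex.re_sum,
    Finset.mul_sum, Finset.sum_mul]
  rw [← Finset.sum_add_distrib]
  apply Finset.sum_congr rfl; intro p _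
  rw [← Finset.sum_add_distrib]
  apply Finset.sum_congr rfl; intro q _
  simp [Complex.mul_re, Complex.mul_im]

lemma qid {ι : Type*} [Fintype ι] [DecidableEq ι] (w : ι → ℝ) (M : Matrix ι ι ℝ)
    (u : ι → ℂ) :
    ∑ p, w p * Complex.normSq ((((1 + M).map Complex.ofReal) *ᵥ u) p)
      = ∑ p, w p * Complex.normSq ((((1 - M).map Complex.ofReal) *ᵥ u) p)
        + 4 * (∑ p, (starRingEnd ℂ) (u p)
            * ((((Matrix.diagonal w * M).map Complex.ofReal) *ᵥ u) p)).re := by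
  have hmap : ∀ P : Matrix ι ι ℝ, P.map Complex.ofReal = P.map Complex.ofRealHom := by
    intro P; rfl
  set g := (M.map Complex.ofReal) *ᵥ u with hg
  have h1 : ((1 + M).map Complex.ofReal) *ᵥ u = u + g := by
    rw [hmap, Matrix.map_add _ (map_add Complex.ofRealHom), Matrix.add_mulVec]
    simp [Matrix.map_one, Matrix.one_mulVec, hg, hmap]
  have h2 : ((1 - M).map Complex.ofReal) *ᵥ u = u - g := by
    rw [hmap, Matrix.map_sub _ (map_sub Complex.ofRealHom), Matrix.sub_mulVec]
    simp [Matrix.map_one, Matrix.one_mulVec, hg, hmap]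
  have h3 : (((Matrix.diagonal w * M).map Complex.ofReal) *ᵥ u)
      = fun p => (w p : ℂ) * g p := by
    rw [hmap, Matrix.map_mul, ← Matrix.mulVec_mulVec]
    funext p
    rw [Matrix.diagonal_map (by simp)]
    simp [Matrix.mulVec_diagonal, hg, hmap]
  rw [h1, h2, h3, Complex.re_sum]
  rw [Finset.mul_sum, ← Finset.sum_add_distrib]
  apply Finset.sum_congr rfl; intro p _
  simp only [Pi.add_apply, Pi.sub_apply, Complex.normSq_apply, Complex.mul_re,
    Complex.mul_im, Complex.add_re, Complex.add_im, Complex.sub_re, Complex.sub_im,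
    Complex.conj_re, Complex.conj_im, Complex.ofReal_re, Complex.ofReal_im]
  ring

theorem stmt19 {n m : ℕ}
    (A : Matrix (Fin n) (Fin n) ℝ) (hA : NegDef A)
    (B : Matrix (Fin m) (Fin m) ℝ) (hB : NegDef B)
    (d : Fin n → ℝ) (hd : ∀ i, 0 < d i)
    (e : Fin m → ℝ) (he : ∀ j, 0 < e j)
    (κα κβ : ℝ) (hκα : 0 ≤ κα) (hκβ : 0 ≤ κβ)
    (cx cy : ℝ) (hcx : 0 < cx) (hcy : 0 < cy)
    (Ax Ay : Matrix (Fin m × Fin n) (Fin m × Fin n) ℝ)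
    (hAx : Ax = cx • ((1 : Matrix (Fin m) (Fin m) ℝ) ⊗ₖ
      (Matrix.diagonal d * (A + κα • Aᵀ))))
    (hAy : Ay = cy • ((Matrix.diagonal e * (B + κβ • Bᵀ)) ⊗ₖ
      (1 : Matrix (Fin n) (Fin n) ℝ))) :
    Ax * Ay = Ay * Ax ∧
    IsUnit (1 - Ax) ∧ IsUnit (1 - Ay) ∧
    (∀ μ ∈ spectrum ℂ
        (((1 - Ay)⁻¹ * (1 - Ax)⁻¹ * (1 + Ax) * (1 + Ay)).map Complex.ofReal),
      ‖μ‖ < 1) ∧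
    spectralRadius ℂ
        (((1 - Ay)⁻¹ * (1 - Ax)⁻¹ * (1 + Ax) * (1 + Ay)).map Complex.ofReal) < 1 := by
  -- abbreviations
  set Mx := A + κα • Aᵀ with hMxdef
  set My := B + κβ • Bᵀ with hMydef
  -- quadratic forms of Mx, My are ≤ 0, < 0 for nonzero vectors
  have hMx : ∀ x : Fin n → ℝ, x ≠ 0 → x ⬝ᵥ Mx *ᵥ x < 0 := by
    intro x hx
    have ht : x ⬝ᵥ Aᵀ *ᵥ x = x ⬝ᵥ A *ᵥ x := by
      rw [Matrix.dotProduct_mulVec, Matrix.vecMul_transpose, dotProduct_comm]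
    have h1 : x ⬝ᵥ Mx *ᵥ x = (1 + κα) * (x ⬝ᵥ A *ᵥ x) := by
      rw [hMxdef, Matrix.add_mulVec, dotProduct_add, Matrix.smul_mulVec,
        dotProduct_smul, ht]
      simp [smul_eq_mul]; ring
    have := hA x hx
    rw [h1]; nlinarith
  have hMy : ∀ x : Fin m → ℝ, x ≠ 0 → x ⬝ᵥ My *ᵥ x < 0 := by
    intro x hx
    have ht : x ⬝ᵥ Bᵀ *ᵥ x = x ⬝ᵥ B *ᵥ x := by
      rw [Matrix.dotProduct_mulVec, Matrix.vecMul_transpose, dotProduct_comm]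
    have h1 : x ⬝ᵥ My *ᵥ x = (1 + κβ) * (x ⬝ᵥ B *ᵥ x) := by
      rw [hMydef, Matrix.add_mulVec, dotProduct_add, Matrix.smul_mulVec,
        dotProduct_smul, ht]
      simp [smul_eq_mul]; ring
    have := hB x hx
    rw [h1]; nlinarith
  -- the commutation
  have hcomm : Ax * Ay = Ay * Ax := by
    rw [hAx, hAy, Algebra.mul_smul_comm, Algebra.smul_mul_assoc,
      Algebra.mul_smul_comm, Algebra.smul_mul_assoc, ← Matrix.mul_kronecker_mul,
      ← Matrix.mul_kronecker_mul, Matrix.one_mul, Matrix.mul_one, Matrix.one_mul,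
      Matrix.mul_one, smul_comm cy cx]
  -- weights
  set w : Fin m × Fin n → ℝ := fun p => (e p.1)⁻¹ * (d p.2)⁻¹ with hwdef
  have hw : ∀ p, 0 < w p := fun p =>
    mul_pos (inv_pos.2 (he p.1)) (inv_pos.2 (hd p.2))
  set W : Matrix (Fin m × Fin n) (Fin m × Fin n) ℝ := Matrix.diagonal w with hWdef
  -- W * Ax and W * Ay in kronecker normal form
  have hWx : W * Ax = cx • ((Matrix.diagonal fun j => (e j)⁻¹) ⊗ₖ Mx) := by
    rw [hAx, Algebra.mul_smul_comm, hWdef]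
    have : (Matrix.diagonal w) = (Matrix.diagonal fun j => (e j)⁻¹) ⊗ₖ
        (Matrix.diagonal fun i => (d i)⁻¹) := by
      rw [Matrix.diagonal_kronecker_diagonal]
    have hdd : (Matrix.diagonal fun i => (d i)⁻¹ * d i)
        = (1 : Matrix (Fin n) (Fin n) ℝ) := by
      rw [show (fun i => (d i)⁻¹ * d i) = fun _ => (1:ℝ) from
        funext fun i => inv_mul_cancel₀ (hd i).ne', Matrix.diagonal_one]
    rw [this, ← Matrix.mul_kronecker_mul, Matrix.mul_one, ← Matrix.mul_assoc,
      Matrix.diagonal_mul_diagonal, hdd, Matrix.one_mul]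
  have hWy : W * Ay = cy • (My ⊗ₖ (Matrix.diagonal fun i => (d i)⁻¹)) := by
    rw [hAy, Algebra.mul_smul_comm, hWdef]
    have : (Matrix.diagonal w) = (Matrix.diagonal fun j => (e j)⁻¹) ⊗ₖ
        (Matrix.diagonal fun i => (d i)⁻¹) := by
      rw [Matrix.diagonal_kronecker_diagonal]
    have hee : (Matrix.diagonal fun j => (e j)⁻¹ * e j)
        = (1 : Matrix (Fin m) (Fin m) ℝ) := by
      rw [show (fun j => (e j)⁻¹ * e j) = fun _ => (1:ℝ) from
        funext fun j => inv_mul_cancel₀ (he j).ne', Matrix.diagonal_one]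
    rw [this, ← Matrix.mul_kronecker_mul, Matrix.mul_one, ← Matrix.mul_assoc,
      Matrix.diagonal_mul_diagonal, hee, Matrix.one_mul]
  -- key negativity
  have keyx : ∀ x : Fin m × Fin n → ℝ,
      (x ⬝ᵥ (W * Ax) *ᵥ x ≤ 0) ∧ (x ≠ 0 → x ⬝ᵥ (W * Ax) *ᵥ x < 0) := by
    intro x
    have hq : x ⬝ᵥ (W * Ax) *ᵥ x
        = cx * ∑ j, (e j)⁻¹ * ((fun i => x (j, i)) ⬝ᵥ Mx *ᵥ (fun i => x (j, i))) := by
      rw [hWx, Matrix.smul_mulVec, dotProduct_smul, quad_diag_kron]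
      rfl
    have hterm : ∀ j, (e j)⁻¹ * ((fun i => x (j, i)) ⬝ᵥ Mx *ᵥ (fun i => x (j, i))) ≤ 0 := by
      intro j
      rcases eq_or_ne (fun i => x (j, i)) 0 with h0 | h0
      · rw [h0]; simp
      · exact le_of_lt (mul_neg_of_pos_of_neg (inv_pos.2 (he j)) (hMx _ h0))
    constructor
    · rw [hq]
      exact mul_nonpos_of_nonneg_of_nonpos (le_of_lt hcx)
        (Finset.sum_nonpos fun j _ => hterm j)
    · intro hx
      obtain ⟨p, hp⟩ := Function.ne_iff.mp hx
      have hj : (fun i => x (p.1, i)) ≠ 0 := by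
        intro h; apply hp; have := congrFun h p.2; simpa using this
      have hstrict : (e p.1)⁻¹ * ((fun i => x (p.1, i)) ⬝ᵥ Mx *ᵥ (fun i => x (p.1, i))) < 0 :=
        mul_neg_of_pos_of_neg (inv_pos.2 (he p.1)) (hMx _ hj)
      rw [hq]
      apply mul_neg_of_pos_of_neg hcx
      have := Finset.sum_lt_sum (f := fun j => (e j)⁻¹ *
          ((fun i => x (j, i)) ⬝ᵥ Mx *ᵥ (fun i => x (j, i)))) (g := fun _ => (0:ℝ))
        (fun j _ => hterm j) ⟨p.1, Finset.mem_univ _, hstrict⟩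
      simpa using this
  have keyy : ∀ x : Fin m × Fin n → ℝ,
      (x ⬝ᵥ (W * Ay) *ᵥ x ≤ 0) ∧ (x ≠ 0 → x ⬝ᵥ (W * Ay) *ᵥ x < 0) := by
    intro x
    have hq : x ⬝ᵥ (W * Ay) *ᵥ x
        = cy * ∑ i, (d i)⁻¹ * ((fun j => x (j, i)) ⬝ᵥ My *ᵥ (fun j => x (j, i))) := by
      rw [hWy, Matrix.smul_mulVec, dotProduct_smul, quad_kron_diag]
      rfl
    have hterm : ∀ i, (d i)⁻¹ * ((fun j => x (j, i)) ⬝ᵥ My *ᵥ (fun j => x (j, i))) ≤ 0 := by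
      intro i
      rcases eq_or_ne (fun j => x (j, i)) 0 with h0 | h0
      · rw [h0]; simp
      · exact le_of_lt (mul_neg_of_pos_of_neg (inv_pos.2 (hd i)) (hMy _ h0))
    constructor
    · rw [hq]
      exact mul_nonpos_of_nonneg_of_nonpos (le_of_lt hcy)
        (Finset.sum_nonpos fun i _ => hterm i)
    · intro hx
      obtain ⟨p, hp⟩ := Function.ne_iff.mp hx
      have hj : (fun j => x (j, p.2)) ≠ 0 := by
        intro h; apply hp; have := congrFun h p.1; simpa using this
      have hstrict : (d p.2)⁻¹ * ((fun j => x (j, p.2)) ⬝ᵥ My *ᵥ (fun j => x (j, p.2))) < 0 :=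
        mul_neg_of_pos_of_neg (inv_pos.2 (hd p.2)) (hMy _ hj)
      rw [hq]
      apply mul_neg_of_pos_of_neg hcy
      have := Finset.sum_lt_sum (f := fun i => (d i)⁻¹ *
          ((fun j => x (j, i)) ⬝ᵥ My *ᵥ (fun j => x (j, i)))) (g := fun _ => (0:ℝ))
        (fun i _ => hterm i) ⟨p.2, Finset.mem_univ _, hstrict⟩
      simpa using this
  -- invertibility
  have hinv : ∀ M : Matrix (Fin m × Fin n) (Fin m × Fin n) ℝ,
      (∀ x : Fin m × Fin n → ℝ, x ≠ 0 → x ⬝ᵥ (W * M) *ᵥ x < 0) → IsUnit (1 - M) := by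
    intro M hkey
    rw [Matrix.isUnit_iff_isUnit_det, isUnit_iff_ne_zero]
    intro hdet
    obtain ⟨v, hv, hmv⟩ := (Matrix.exists_mulVec_eq_zero_iff).mpr hdet
    have hvM : v = M *ᵥ v := by
      have := hmv
      rw [Matrix.sub_mulVec, Matrix.one_mulVec, sub_eq_zero] at this
      exact this
    have hpos : 0 < v ⬝ᵥ W *ᵥ v := by
      have : v ⬝ᵥ W *ᵥ v = ∑ p, w p * (v p)^2 := by
        simp only [dotProduct, hWdef, Matrix.mulVec_diagonal]
        apply Finset.sum_congr rfl; intro p _; ring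
      rw [this]
      obtain ⟨p, hp⟩ := Function.ne_iff.mp hv
      have hp2 : (0:ℝ) < (v p)^2 := lt_of_le_of_ne (sq_nonneg _) (Ne.symm (pow_ne_zero 2 hp))
      have := Finset.sum_lt_sum (f := fun _ => (0:ℝ)) (g := fun p => w p * (v p)^2)
        (fun q _ => mul_nonneg (hw q).le (sq_nonneg _))
        ⟨p, Finset.mem_univ _, mul_pos (hw p) hp2⟩
      simpa using this
    have hneg : v ⬝ᵥ W *ᵥ v < 0 := by
      have h1 : v ⬝ᵥ (W * M) *ᵥ v = v ⬝ᵥ W *ᵥ v := by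
        rw [← Matrix.mulVec_mulVec, ← hvM]
      rw [← h1]; exact hkey v hv
    linarith
  have hux : IsUnit (1 - Ax) := hinv Ax (fun x hx => (keyx x).2 hx)
  have huy : IsUnit (1 - Ay) := hinv Ay (fun x hx => (keyy x).2 hx)
  -- complex machinery
  classical
  set Qc : ((Fin m × Fin n) → ℂ) → ℝ := fun u => ∑ p, w p * Complex.normSq (u p) with hQc
  have hQpos : ∀ u, u ≠ 0 → 0 < Qc u := by
    intro u hu
    obtain ⟨p, hp⟩ := Function.ne_iff.mp hu
    have := Finset.sum_lt_sum (f := fun _ => (0:ℝ))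
      (g := fun p => w p * Complex.normSq (u p))
      (fun q _ => mul_nonneg (hw q).le (Complex.normSq_nonneg _))
      ⟨p, Finset.mem_univ _, mul_pos (hw p) (Complex.normSq_pos.mpr hp)⟩
    simpa [hQc] using this
  have hQsmul : ∀ (z : ℂ) x, Qc (z • x) = Complex.normSq z * Qc x := by
    intro z x
    simp only [hQc, Pi.smul_apply, smul_eq_mul, Complex.normSq_mul, Finset.mul_sum]
    apply Finset.sum_congr rfl; intro p _; ring
  have hcontr : ∀ M : Matrix (Fin m × Fin n) (Fin m × Fin n) ℝ,
      (∀ x, x ⬝ᵥ (W * M) *ᵥ x ≤ 0) → (∀ x, x ≠ 0 → x ⬝ᵥ (W * M) *ᵥ x < 0) →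
      ∀ u : (Fin m × Fin n) → ℂ,
        (Qc (((1 + M).map Complex.ofReal) *ᵥ u)
          ≤ Qc (((1 - M).map Complex.ofReal) *ᵥ u)) ∧
        (u ≠ 0 → Qc (((1 + M).map Complex.ofReal) *ᵥ u)
          < Qc (((1 - M).map Complex.ofReal) *ᵥ u)) := by
    intro M hle hlt u
    have hid := qid w M u
    have hre := reQuad (Matrix.diagonal w * M) u
    have hWM : Matrix.diagonal w * M = W * M := by rw [hWdef]
    rw [hWM] at hid hre
    constructor
    · have : (∑ p, (starRingEnd ℂ) (u p)
          * (((W * M).map Complex.ofReal) *ᵥ u) p).re ≤ 0 := by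
        rw [hre]; exact add_nonpos (hle _) (hle _)
      simp only [hQc]; linarith [hid]
    · intro hu
      have hru : (∑ p, (starRingEnd ℂ) (u p)
          * (((W * M).map Complex.ofReal) *ᵥ u) p).re < 0 := by
        rw [hre]
        rcases eq_or_ne (fun p => (u p).re) 0 with h0 | h0
        · have him : (fun p => (u p).im) ≠ 0 := by
            intro h; apply hu; funext p
            have h1 := congrFun h0 p; have h2 := congrFun h p
            exact Complex.ext (by simpa using h1) (by simpa using h2)
          calc (fun p => (u p).re) ⬝ᵥ (W * M) *ᵥ (fun p => (u p).re)
                + (fun p => (u p).im) ⬝ᵥ (W * M) *ᵥ (fun p => (u p).im)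
              < (fun p => (u p).re) ⬝ᵥ (W * M) *ᵥ (fun p => (u p).re) + 0 := by
                have := hlt _ him; linarith
            _ ≤ 0 := by have := hle (fun p => (u p).re); linarith
        · calc (fun p => (u p).re) ⬝ᵥ (W * M) *ᵥ (fun p => (u p).re)
                + (fun p => (u p).im) ⬝ᵥ (W * M) *ᵥ (fun p => (u p).im)
              < 0 + (fun p => (u p).im) ⬝ᵥ (W * M) *ᵥ (fun p => (u p).im) := by
                have := hlt _ h0; linarith
            _ ≤ 0 := by have := hle (fun p => (u p).im); linarith
      simp only [hQc]; linarith [hid]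
  -- determinants
  have hdx : IsUnit (1 - Ax).det := (Matrix.isUnit_iff_isUnit_det _).mp hux
  have hdy : IsUnit (1 - Ay).det := (Matrix.isUnit_iff_isUnit_det _).mp huy
  set T := (1 - Ay)⁻¹ * (1 - Ax)⁻¹ * (1 + Ax) * (1 + Ay) with hT
  have hNT : ((1 - Ax) * (1 - Ay)) * T = (1 + Ax) * (1 + Ay) := by
    have hyinv : (1 - Ay) * (1 - Ay)⁻¹ = 1 := Matrix.mul_nonsing_inv _ hdy
    have hxinv : (1 - Ax) * (1 - Ax)⁻¹ = 1 := Matrix.mul_nonsing_inv _ hdx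
    calc ((1 - Ax) * (1 - Ay)) * ((1 - Ay)⁻¹ * (1 - Ax)⁻¹ * (1 + Ax) * (1 + Ay))
        = (1 - Ax) * (((1 - Ay) * (1 - Ay)⁻¹)
            * ((1 - Ax)⁻¹ * ((1 + Ax) * (1 + Ay)))) := by
          simp only [Matrix.mul_assoc]
      _ = (1 - Ax) * ((1 - Ax)⁻¹ * ((1 + Ax) * (1 + Ay))) := by
          rw [hyinv, Matrix.one_mul]
      _ = ((1 - Ax) * (1 - Ax)⁻¹) * ((1 + Ax) * (1 + Ay)) := by
          rw [Matrix.mul_assoc]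
      _ = (1 + Ax) * (1 + Ay) := by rw [hxinv, Matrix.one_mul]
  have hc1 : (1 - Ax) * (1 + Ay) = (1 + Ay) * (1 - Ax) := by
    simp only [Matrix.mul_add, Matrix.add_mul, Matrix.mul_sub, Matrix.sub_mul,
      Matrix.mul_one, Matrix.one_mul, hcomm]
    abel
  have hc2 : (1 - Ay) * (1 - Ax) = (1 - Ax) * (1 - Ay) := by
    simp only [Matrix.mul_sub, Matrix.sub_mul, Matrix.mul_one, Matrix.one_mul, hcomm]
    abel
  have hmapmul : ∀ P Q : Matrix (Fin m × Fin n) (Fin m × Fin n) ℝ,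
      (P * Q).map Complex.ofReal = P.map Complex.ofReal * Q.map Complex.ofReal := by
    intro P Q
    exact Matrix.map_mul (f := Complex.ofRealHom)
  have hdetC : ∀ P : Matrix (Fin m × Fin n) (Fin m × Fin n) ℝ, IsUnit P.det →
      ∀ v : (Fin m × Fin n) → ℂ, (P.map Complex.ofReal) *ᵥ v = 0 → v = 0 := by
    intro P hP v hPv
    have hdet : (P.map Complex.ofReal).det ≠ 0 := by
      have : (P.map Complex.ofReal).det = Complex.ofReal P.det := by
        rw [show P.map Complex.ofReal = Complex.ofRealHom.mapMatrix P from rfl,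
          ← RingHom.map_det]
        rfl
      rw [this]
      simpa using hP.ne_zero
    exact Matrix.eq_zero_of_mulVec_eq_zero hdet hPv
  have main : ∀ μ ∈ spectrum ℂ (T.map Complex.ofReal), ‖μ‖ < 1 := by
    intro μ hμ
    rw [spectrum.mem_iff] at hμ
    have hdet0 : (algebraMap ℂ _ μ - T.map Complex.ofReal).det = 0 := by
      by_contra h
      exact hμ ((Matrix.isUnit_iff_isUnit_det _).mpr (isUnit_iff_ne_zero.mpr h))
    obtain ⟨v, hv, hmv⟩ := (Matrix.exists_mulVec_eq_zero_iff).mpr hdet0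
    have heig : (T.map Complex.ofReal) *ᵥ v = μ • v := by
      rw [Matrix.sub_mulVec] at hmv
      have halg : (algebraMap ℂ (Matrix (Fin m × Fin n) (Fin m × Fin n) ℂ) μ) *ᵥ v
          = μ • v := by
        rw [Matrix.algebraMap_eq_diagonal]
        funext p
        simp [Matrix.mulVec_diagonal, Pi.algebraMap_apply, Algebra.algebraMap_self_apply]
      rw [halg] at hmv
      have := sub_eq_zero.mp hmv
      exact this.symm
    -- eigen equation for the products
    have hPN : (((1 + Ax) * (1 + Ay)).map Complex.ofReal) *ᵥ v
        = μ • ((((1 - Ax) * (1 - Ay)).map Complex.ofReal) *ᵥ v) := by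
      have h1 := congrArg (fun P => (P.map Complex.ofReal) *ᵥ v) hNT
      rw [hmapmul, ← Matrix.mulVec_mulVec, heig, Matrix.mulVec_smul] at h1
      exact h1.symm
    set v2 : (Fin m × Fin n) → ℂ := ((1 - Ax).map Complex.ofReal) *ᵥ v with hv2def
    have hv2 : v2 ≠ 0 := fun h => hv (hdetC _ hdx v h)
    set vN : (Fin m × Fin n) → ℂ := ((1 - Ay).map Complex.ofReal) *ᵥ v2 with hvNdef
    have hvN : vN ≠ 0 := fun h => hv2 (hdetC _ hdy v2 h)
    have hvNeq : vN = (((1 - Ax) * (1 - Ay)).map Complex.ofReal) *ᵥ v := by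
      rw [hvNdef, hv2def, Matrix.mulVec_mulVec, ← hmapmul, hc2]
    set u1 : (Fin m × Fin n) → ℂ := ((1 + Ay).map Complex.ofReal) *ᵥ v with hu1def
    have step1 : Qc ((((1 + Ax) * (1 + Ay)).map Complex.ofReal) *ᵥ v)
        ≤ Qc (((1 - Ax).map Complex.ofReal) *ᵥ u1) := by
      rw [hmapmul, ← Matrix.mulVec_mulVec, ← hu1def]
      exact (hcontr Ax (fun x => (keyx x).1) (fun x hx => (keyx x).2 hx) u1).1
    have hswap : ((1 - Ax).map Complex.ofReal) *ᵥ u1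
        = ((1 + Ay).map Complex.ofReal) *ᵥ v2 := by
      rw [hu1def, hv2def, Matrix.mulVec_mulVec, Matrix.mulVec_mulVec, ← hmapmul,
        ← hmapmul, hc1]
    have step2 : Qc (((1 + Ay).map Complex.ofReal) *ᵥ v2)
        < Qc (((1 - Ay).map Complex.ofReal) *ᵥ v2) :=
      (hcontr Ay (fun x => (keyy x).1) (fun x hx => (keyy x).2 hx) v2).2 hv2
    have hchain : Qc ((((1 + Ax) * (1 + Ay)).map Complex.ofReal) *ᵥ v) < Qc vN := by
      calc Qc ((((1 + Ax) * (1 + Ay)).map Complex.ofReal) *ᵥ v)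
          ≤ Qc (((1 - Ax).map Complex.ofReal) *ᵥ u1) := step1
        _ = Qc (((1 + Ay).map Complex.ofReal) *ᵥ v2) := by rw [hswap]
        _ < Qc (((1 - Ay).map Complex.ofReal) *ᵥ v2) := step2
        _ = Qc vN := by rw [hvNdef]
    rw [hPN, ← hvNeq, hQsmul] at hchain
    have hQN : 0 < Qc vN := hQpos _ hvN
    have hns : Complex.normSq μ < 1 := by
      by_contra h
      push_neg at h
      nlinarith
    have habs : (‖μ‖)^2 < 1 := by rw [Complex.sq_norm]; exact hns
    nlinarith [norm_nonneg μ]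
  refine ⟨hcomm, hux, huy, main, ?_⟩
  -- spectral radius
  have hfin : (spectrum ℂ (T.map Complex.ofReal)).Finite := Matrix.finite_spectrum _
  rcases (spectrum ℂ (T.map Complex.ofReal)).eq_empty_or_nonempty with hemp | hne
  · rw [spectralRadius, hemp]
    simp
  · obtain ⟨μ0, hμ0mem, hμ0max⟩ := hfin.toFinset.exists_max_image (fun μ => ‖μ‖₊)
      (by simpa [Set.Finite.toFinset_nonempty] using hne)
    rw [Set.Finite.mem_toFinset] at hμ0mem
    have hb : spectralRadius ℂ (T.map Complex.ofReal) ≤ (‖μ0‖₊ : ENNReal) := by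
      apply iSup₂_le
      intro k hk
      exact_mod_cast ENNReal.coe_le_coe.mpr (hμ0max k (hfin.mem_toFinset.mpr hk))
    have hμ0 : (‖μ0‖₊ : ENNReal) < 1 := by
      have := main μ0 hμ0mem
      exact_mod_cast this
    exact lt_of_le_of_lt hb hμ0
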